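/- Let f, g : ℝ → ℝ be continuous functions such that f is periodic with minimal (fundamental) period T_f > 0, g is periodic with minimal period T_g > 0, and f and g are both nonconstant. If the sum f + g is periodic with some period T > 0, then the ratio T_f / T_g is a rational number. -/

import Mathlib

/-- The set of periods of a function is an additive subgroup. -/
def periodsSubgroup (f : ℝ → ℝ) : AddSubgroup ℝ where
  carrier := {t | ∀ x, f (x + t) = f x}
  zero_mem' := by intro x; simp
  add_mem' := by
    intro a b ha hb x
    rw [← add_assoc, hb, ha]
  neg_mem' := by
    intro a ha x
    have := ha (x + -a)
    rw [neg_add_cancel_right] at this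
    exact this.symm

/-- Any period of a function with minimal positive period `Tf` is an integer
multiple of `Tf`. -/
lemma period_eq_int_mul (f : ℝ → ℝ) (Tf : ℝ) (hTf : 0 < Tf)
    (hfper : ∀ x, f (x + Tf) = f x)
    (hfmin : ∀ T' : ℝ, 0 < T' → (∀ x, f (x + T') = f x) → Tf ≤ T')
    (t : ℝ) (ht : ∀ x, f (x + t) = f x) : ∃ n : ℤ, t = n * Tf := by
  set n : ℤ := ⌊t / Tf⌋ with hn
  refine ⟨n, ?_⟩
  have hmul : ((n : ℝ) * Tf) ∈ periodsSubgroup f := by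
    have := AddSubgroup.zsmul_mem (periodsSubgroup f) (hfper : Tf ∈ periodsSubgroup f) n
    simpa using this
  have hr : t - n * Tf ∈ periodsSubgroup f :=
    AddSubgroup.sub_mem _ (ht : t ∈ periodsSubgroup f) hmul
  have h0 : 0 ≤ t - n * Tf := Int.sub_floor_div_mul_nonneg t hTf
  have h1 : t - n * Tf < Tf := Int.sub_floor_div_mul_lt t hTf
  rcases eq_or_lt_of_le h0 with h | h
  · linarith
  · exact absurd (hfmin _ h hr) (by linarith)

/-- A continuous periodic function attains a global maximum. -/
lemma exists_global_max (f : ℝ → ℝ) (hf : Continuous f) (Tf : ℝ) (hTf : 0 < Tf)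
    (hfper : ∀ x, f (x + Tf) = f x) : ∃ x0, ∀ x, f x ≤ f x0 := by
  obtain ⟨x0, hx0mem, hx0⟩ := isCompact_Icc.exists_isMaxOn (Set.nonempty_Icc.2 hTf.le)
    (hf.continuousOn (s := Set.Icc 0 Tf))
  refine ⟨x0, fun x => ?_⟩
  set n : ℤ := ⌊x / Tf⌋ with hn
  have hmem : x - n * Tf ∈ Set.Icc 0 Tf :=
    ⟨Int.sub_floor_div_mul_nonneg x hTf, (Int.sub_floor_div_mul_lt x hTf).le⟩
  have hmul : ((n : ℝ) * Tf) ∈ periodsSubgroup f := by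
    have := AddSubgroup.zsmul_mem (periodsSubgroup f) (hfper : Tf ∈ periodsSubgroup f) n
    simpa using this
  have hx : f (x - n * Tf + n * Tf) = f (x - n * Tf) := hmul _
  rw [sub_add_cancel] at hx
  rw [hx]
  exact hx0 hmem

/-- **Theorem 3.1 (necessity, two continuous components).** If `f` and `g` are
continuous, nonconstant, with minimal positive periods `Tf` and `Tg`
respectively, and `f + g` is periodic with some positive period, then `Tf / Tg`
is rational. -/
theorem period_ratio_rational_of_sum_periodic (f g : ℝ → ℝ)
    (hf : Continuous f) (hg : Continuous g)
    (Tf Tg : ℝ) (hTf : 0 < Tf) (hTg : 0 < Tg)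
    (hfper : ∀ x, f (x + Tf) = f x)
    (hfmin : ∀ T' : ℝ, 0 < T' → (∀ x, f (x + T') = f x) → Tf ≤ T')
    (hgper : ∀ x, g (x + Tg) = g x)
    (hgmin : ∀ T' : ℝ, 0 < T' → (∀ x, g (x + T') = g x) → Tg ≤ T')
    (hfnc : ∃ x y, f x ≠ f y) (hgnc : ∃ x y, g x ≠ g y)
    (hsum : ∃ T : ℝ, 0 < T ∧ ∀ x, f (x + T) + g (x + T) = f x + g x) :
    ∃ q : ℚ, Tf / Tg = (q : ℝ) := by
  obtain ⟨T, hT, hTper⟩ := hsum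
  set S : AddSubgroup ℝ := AddSubgroup.closure {Tf, Tg} with hS
  rcases S.dense_or_cyclic with hdense | ⟨a, ha⟩
  · -- dense case: h := f(·+T) - f is constant, and the constant is 0.
    set h : ℝ → ℝ := fun x => f (x + T) - f x with hh
    have hhc : Continuous h := ((hf.comp (continuous_id.add continuous_const)).sub hf)
    -- h has period Tf and Tg
    have hP : S ≤ periodsSubgroup h := by
      rw [hS, AddSubgroup.closure_le]
      intro t ht
      simp only [Set.mem_insert_iff, Set.mem_singleton_iff] at ht
      rcases ht with h' | h'
      · intro x
        simp only [hh, h']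
        rw [add_right_comm, hfper, hfper]
      · intro x
        simp only [hh, h']
        have h1 := hTper x
        have h2 := hTper (x + Tg)
        rw [add_right_comm x Tg T] at h2 ⊢
        rw [hgper (x + T), hgper x] at h2
        linarith
    -- h agrees with the constant h 0 on the dense set S
    have hconst : ∀ x, h x = h 0 := by
      have heq : Set.EqOn h (fun _ => h 0) (closure (S : Set ℝ)) := by
        apply Set.EqOn.closure _ hhc continuous_const
        intro s hs
        have := hP hs 0
        simpa using this
      intro x
      exact heq (hdense x)
    obtain ⟨x0, hx0⟩ := exists_global_max f hf Tf hTf hfper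
    obtain ⟨x1, hx1⟩ : ∃ x1, ∀ x, f x1 ≤ f x := by
      obtain ⟨x1, hx1⟩ := exists_global_max (fun x => -f x) (hf.neg) Tf hTf
        (fun x => by simp [hfper x])
      exact ⟨x1, fun x => by have := hx1 x; simpa using this⟩
    have hle : h 0 ≤ 0 := by
      have h1 := hconst x0
      have h2 : f (x0 + T) ≤ f x0 := hx0 _
      simp only [hh] at h1 ⊢
      linarith
    have hge : 0 ≤ h 0 := by
      have h1 := hconst x1
      have h2 : f x1 ≤ f (x1 + T) := hx1 _
      simp only [hh] at h1 ⊢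
      linarith
    have hzero : h 0 = 0 := le_antisymm hle hge
    have hfT : ∀ x, f (x + T) = f x := by
      intro x
      have h1 := hconst x
      rw [hzero] at h1
      simp only [hh] at h1
      linarith
    have hgT : ∀ x, g (x + T) = g x := by
      intro x
      have := hTper x
      rw [hfT x] at this
      linarith
    obtain ⟨n, hn⟩ := period_eq_int_mul f Tf hTf hfper hfmin T hfT
    obtain ⟨m, hm⟩ := period_eq_int_mul g Tg hTg hgper hgmin T hgT
    have hn0 : (n : ℝ) ≠ 0 := by
      intro h0; rw [h0, zero_mul] at hn; linarith
    have hm0 : (m : ℝ) ≠ 0 := by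
      intro h0; rw [h0, zero_mul] at hm; linarith
    refine ⟨(m : ℚ) / n, ?_⟩
    have hTf' : Tf = T / n := by field_simp [hn]; rw [hn]; ring
    have hTg' : Tg = T / m := by field_simp [hm]; rw [hm]; ring
    rw [hTf', hTg']
    have hT0 : T ≠ 0 := ne_of_gt hT
    push_cast
    field_simp
  · -- cyclic case: Tf and Tg are both integer multiples of a
    have hTfS : Tf ∈ S := AddSubgroup.subset_closure (by simp)
    have hTgS : Tg ∈ S := AddSubgroup.subset_closure (by simp)
    rw [ha] at hTfS hTgS
    rw [AddSubgroup.mem_closure_singleton] at hTfS hTgS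
    obtain ⟨n, hn⟩ := hTfS
    obtain ⟨m, hm⟩ := hTgS
    have ha0 : a ≠ 0 := by
      intro h0; rw [h0] at hn; simp at hn; linarith
    have hm0 : (m : ℝ) ≠ 0 := by
      intro h0
      rw [zsmul_eq_mul, h0, zero_mul] at hm; linarith
    refine ⟨(n : ℚ) / m, ?_⟩
    rw [← hn, ← hm]
    push_cast
    rw [zsmul_eq_mul, zsmul_eq_mul]
    rw [mul_div_mul_right _ _ ha0]
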